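/- In the Schur algebra S(n,r) over ℚ, viewed as a quotient of the universal enveloping algebra U(gl_n), the weight idempotent 1_λ coincides with the image of the element ∏_{i=1}^n binom(H_i, λ_i), for any λ ∈ Λ(n,r), where binom(H,a) = H(H−1)⋯(H−a+1)/a! and H_i = e_{ii}. -/

import Mathlib

/-!
STATEMENT 12: In the Schur algebra `S(n,r)` over `ℚ`, viewed as a quotient of the universal
enveloping algebra `U(gl_n)` via the representation `dρ` on `E^{⊗r}` (obtained by
differentiating the diagonal `GL_n`-action), the weight idempotent `1_λ` coincides with the
image of `∏_{i=1}^n binom(H_i, λ_i)`, for any `λ ∈ Λ(n,r)`, where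
`binom(H,a) = H(H−1)⋯(H−a+1)/a!` and `H_i = e_{ii}`.

We model `E^{⊗r}` as `(Fin r → Fin n) → ℚ`, `dρ` is characterized by its values on `gl_n`:
`X` acts as `∑_k 1⊗⋯⊗X⊗⋯⊗1`, which in the standard basis is the matrix
`(i,j) ↦ ∑_k X_{i_k j_k} ∏_{l≠k} δ_{i_l j_l}`.  The statement quantifies over all algebra
maps `π : U(gl_n) → End(E^{⊗r})` extending this Lie algebra representation.
-/

open scoped BigOperators

namespace SchurPaper

variable (n r : ℕ)

abbrev TSpQ := (Fin r → Fin n) → ℚ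

def wt (i : Fin r → Fin n) : Fin n → ℕ :=
  fun j => (Finset.univ.filter fun k => i k = j).card

/-- The weight idempotent `1_λ`. -/
def proj (lam : Fin n → ℕ) : TSpQ n r →ₗ[ℚ] TSpQ n r where
  toFun f := fun i => if wt n r i = lam then f i else 0
  map_add' f g := by funext i; by_cases h : wt n r i = lam <;> simp [h]
  map_smul' c f := by funext i; by_cases h : wt n r i = lam <;> simp [h]

/-- The derivative of the diagonal action: `X ∈ gl_n` acts on `E^{⊗r}` as
`∑_k 1⊗⋯⊗X⊗⋯⊗1`. -/
noncomputable def dAct (X : Matrix (Fin n) (Fin n) ℚ) : Module.End ℚ (TSpQ n r) :=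
  Matrix.toLin' (Matrix.of fun i j : Fin r → Fin n =>
    ∑ k, if ∀ l, l ≠ k → i l = j l then X (i k) (j k) else 0)

attribute [local instance] LieRing.ofAssociativeRing

/-- The universal enveloping algebra of `gl_n` over `ℚ`. -/
abbrev Ugl := UniversalEnvelopingAlgebra ℚ (Matrix (Fin n) (Fin n) ℚ)

/-- `binom(H, a) = H(H-1)⋯(H-a+1)/a!` as an element of `U(gl_n)`. -/
noncomputable def binomU (H : Ugl n) (a : ℕ) : Ugl n :=
  ((a.factorial : ℚ)⁻¹) • ((List.range a).map fun t => H - (t : ℚ) • 1).prod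

/-- Diagonal operator. -/
def diagOp (g : (Fin r → Fin n) → ℚ) : Module.End ℚ (TSpQ n r) where
  toFun f := fun x => g x * f x
  map_add' f h := by funext x; simp [mul_add]
  map_smul' c f := by funext x; simp; ring

@[simp] lemma diagOp_apply (g : (Fin r → Fin n) → ℚ) (f : TSpQ n r) (x) :
    diagOp n r g f x = g x * f x := rfl

lemma diagOp_one : diagOp n r (fun _ => 1) = 1 := by
  refine LinearMap.ext fun f => funext fun x => ?_
  simp

lemma diagOp_mul (g h : (Fin r → Fin n) → ℚ) :
    diagOp n r g * diagOp n r h = diagOp n r (fun x => g x * h x) := by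
  refine LinearMap.ext fun f => funext fun x => ?_
  simp [Module.End.mul_apply, mul_assoc]

lemma diagOp_sub_smul_one (g : (Fin r → Fin n) → ℚ) (t : ℚ) :
    diagOp n r g - t • 1 = diagOp n r (fun x => g x - t) := by
  refine LinearMap.ext fun f => funext fun x => ?_
  simp [sub_mul, LinearMap.sub_apply]

lemma dAct_stdBasis (i : Fin n) :
    dAct n r (Matrix.single i i (1:ℚ)) = diagOp n r (fun x => (wt n r x i : ℚ)) := by
  refine LinearMap.ext fun f => funext fun x => ?_
  rw [dAct, Matrix.toLin'_apply]
  show (Matrix.mulVec _ f) x = _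
  rw [Matrix.mulVec, dotProduct]
  rw [Finset.sum_eq_single x]
  · have this1 : ∀ k : Fin r, (if ∀ l, l ≠ k → x l = x l then
        Matrix.single i i (1:ℚ) (x k) (x k) else 0)
        = if x k = i then 1 else 0 := by
      intro k
      rw [if_pos (fun l _ => rfl), Matrix.single]
      by_cases h : x k = i
      · simp [h]
      · simp [h, Ne.symm h]
    have key : (∑ k : Fin r, if ∀ l, l ≠ k → x l = x l then
        Matrix.single i i (1:ℚ) (x k) (x k) else 0) = (wt n r x i : ℚ) := by
      rw [Finset.sum_congr rfl fun k _ => this1 k, Finset.sum_boole]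
      simp [wt]
    show (∑ k : Fin r, if ∀ l, l ≠ k → x l = x l then
        Matrix.single i i (1:ℚ) (x k) (x k) else 0) * f x = _
    rw [key]
    rfl
  · intro y _ hy
    have ⟨l0, hl0⟩ : ∃ l0, x l0 ≠ y l0 := by
      by_contra h
      push_neg at h
      exact hy ((funext h : x = y).symm)
    have this1 : ∀ k : Fin r, (if ∀ l, l ≠ k → x l = y l then
        Matrix.single i i (1:ℚ) (x k) (y k) else 0) = 0 := by
      intro k
      by_cases hk : k = l0
      · subst hk
        by_cases hc : ∀ l, l ≠ k → x l = y l
        · rw [if_pos hc, Matrix.single]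
          by_cases h1 : i = x k
          · have : ¬ i = y k := fun h2 => hl0 (h1 ▸ h2 ▸ rfl)
            simp [this]
          · simp [h1]
        · rw [if_neg hc]
      · rw [if_neg]
        intro hc
        exact hl0 (hc l0 (Ne.symm hk))
    show (∑ k : Fin r, if ∀ l, l ≠ k → x l = y l then
        Matrix.single i i (1:ℚ) (x k) (y k) else 0) * f y = 0
    rw [Finset.sum_congr rfl fun k _ => this1 k, Finset.sum_const_zero, zero_mul]
  · intro h; exact absurd (Finset.mem_univ x) h

lemma coeM_list_map (l : List ℕ) (f : ℚ → Module.End ℚ (TSpQ n r)) :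
    (List.map f (↑l : List ℚ)) = List.map (fun t : ℕ => f t) l := by
  induction l with
  | nil => rfl
  | cons a l ih => simp_all

lemma cast_descFactorial_succ (m a : ℕ) :
    ((m.descFactorial (a+1) : ℕ) : ℚ) = (m.descFactorial a : ℚ) * ((m:ℚ) - a) := by
  rcases lt_or_ge m a with h | h
  · rw [Nat.descFactorial_eq_zero_iff_lt.2 (Nat.lt_succ_of_lt h),
        Nat.descFactorial_eq_zero_iff_lt.2 h]
    simp
  · rw [Nat.descFactorial_succ, Nat.cast_mul, Nat.cast_sub h, mul_comm]

lemma diagOp_descFactorial (g : (Fin r → Fin n) → ℕ) (a : ℕ) :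
    ((List.range a).map fun t : ℕ =>
        diagOp n r (fun x => (g x : ℚ)) - (t : ℚ) • (1 : Module.End ℚ (TSpQ n r))).prod
      = diagOp n r (fun x => ((g x).descFactorial a : ℚ)) := by
  induction a with
  | zero => simp [diagOp_one n r]
  | succ a ih =>
      rw [List.range_succ, List.map_append, List.prod_append]
      simp only [List.map_cons, List.map_nil, List.prod_cons, List.prod_nil, mul_one]
      rw [ih, diagOp_sub_smul_one, diagOp_mul]
      congr 1
      funext x
      rw [cast_descFactorial_succ]

lemma diagOp_list_prod {α : Type*} (L : List α) (g : α → (Fin r → Fin n) → ℚ) :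
    (L.map fun a => diagOp n r (g a)).prod
      = diagOp n r (fun x => (L.map fun a => g a x).prod) := by
  induction L with
  | nil => simp [diagOp_one n r]
  | cons a L ih =>
      simp only [List.map_cons, List.prod_cons, ih, diagOp_mul]

theorem weight_idempotent_eq_binom_image
    (lam : Fin n → ℕ) (hlam : ∑ i, lam i = r)
    (π : Ugl n →ₐ[ℚ] Module.End ℚ (TSpQ n r))
    (hπ : ∀ X : Matrix (Fin n) (Fin n) ℚ,
      π (UniversalEnvelopingAlgebra.ι ℚ X) = dAct n r X) :
    π (((List.finRange n).map fun i =>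
        binomU n (UniversalEnvelopingAlgebra.ι ℚ (Matrix.single i i (1:ℚ))) (lam i)).prod)
      = proj n r lam := by
  have hbin : ∀ i : Fin n,
      π (binomU n (UniversalEnvelopingAlgebra.ι ℚ (Matrix.single i i (1:ℚ))) (lam i))
        = diagOp n r (fun x => ((wt n r x i).choose (lam i) : ℚ)) := by
    intro i
    rw [binomU, map_smul, map_list_prod, List.map_map, coeM_list_map]
    have : (List.map (fun t : ℕ => (⇑π ∘ fun t : ℚ =>
          UniversalEnvelopingAlgebra.ι ℚ (Matrix.single i i (1:ℚ)) - t • 1) t)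
          (List.range (lam i))).prod
        = diagOp n r (fun x => ((wt n r x i).descFactorial (lam i) : ℚ)) := by
      rw [← diagOp_descFactorial n r (fun x => wt n r x i) (lam i)]
      congr 1
      apply List.map_congr_left
      intro t _
      simp only [Function.comp_apply, map_sub, map_smul, map_one, hπ, dAct_stdBasis]
    rw [this]
    refine LinearMap.ext fun f => funext fun x => ?_
    simp only [LinearMap.smul_apply, diagOp_apply, Pi.smul_apply, smul_eq_mul]
    rw [Nat.descFactorial_eq_factorial_mul_choose]
    push_cast
    rw [← mul_assoc, ← mul_assoc, inv_mul_cancel₀ (by positivity)]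
    ring
  rw [map_list_prod, List.map_map]
  have : ((List.finRange n).map (⇑π ∘ fun i =>
      binomU n (UniversalEnvelopingAlgebra.ι ℚ (Matrix.single i i (1:ℚ))) (lam i))).prod
      = diagOp n r (fun x => ((List.finRange n).map
          fun i => ((wt n r x i).choose (lam i) : ℚ)).prod) := by
    rw [← diagOp_list_prod]
    congr 1
    apply List.map_congr_left
    intro i _
    exact hbin i
  rw [this]
  have hwt : ∀ x : Fin r → Fin n, ∑ j, wt n r x j = r := by
    intro x
    have := Finset.card_eq_sum_card_fiberwise
      (f := x) (s := Finset.univ) (t := Finset.univ) (fun k _ => Finset.mem_univ _)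
    simpa [wt, Finset.card_univ] using this.symm
  refine LinearMap.ext fun f => funext fun x => ?_
  simp only [diagOp_apply, proj, LinearMap.coe_mk, AddHom.coe_mk]
  have hprod : ((List.finRange n).map fun i => ((wt n r x i).choose (lam i) : ℚ)).prod
      = ∏ i, ((wt n r x i).choose (lam i) : ℚ) := by
    rw [Fin.prod_univ_def]
  rw [hprod]
  by_cases h : wt n r x = lam
  · rw [if_pos h]
    have : ∀ i, ((wt n r x i).choose (lam i) : ℚ) = 1 := by
      intro i; rw [h, Nat.choose_self, Nat.cast_one]
    rw [Finset.prod_congr rfl fun i _ => this i, Finset.prod_const_one, one_mul]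
  · rw [if_neg h]
    have ⟨i, hi⟩ : ∃ i, wt n r x i < lam i := by
      by_contra hc
      push_neg at hc
      exact h (funext fun i => ((Finset.sum_eq_sum_iff_of_le
        (fun i _ => hc i)).1 (hlam.trans (hwt x).symm) i (Finset.mem_univ i)).symm)
    rw [Finset.prod_eq_zero (Finset.mem_univ i)
      (by rw [Nat.choose_eq_zero_of_lt hi, Nat.cast_zero]), zero_mul]

end SchurPaper
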